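/- For the 9-dimensional quiver algebra A with basis {i, j, α, β, βα, γ, γ², δ, δ²} and relations δ² = γ³ = αβ, δγ = γδ = 0, δα = γα = 0, βδ = βγ = 0, the commutator subspace [A,A] has k-basis {α, β, αβ − βα}. -/

import Mathlib

/-! The 9-dimensional algebra `A` given by the quiver with vertices `i, j`, arrows
`α : i → j`, `β : j → i`, and loops `γ, δ` at `i`, with relations
`δ² = γ³ = αβ`, `δγ = γδ = 0`, `δα = γα = 0`, `βδ = βγ = 0`.
Paths compose left-to-right, so the product `x * y` means "first `x`, then `y`";
in particular `α * β` is a loop at `i` and `β * α` is a loop at `j`.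
We realise `A` as the quotient of the free algebra on the six generators
`e_i, e_j, α, β, γ, δ` by the path-algebra relations together with the quiver relations. -/

open FreeAlgebra

/-- The defining relations of the quiver algebra: generator `0` is the vertex idempotent
`e_i`, `1` is `e_j`, `2` is `α : i → j`, `3` is `β : j → i`, `4` is the loop `γ` at `i`,
and `5` is the loop `δ` at `i`. -/
inductive QuiverRel (k : Type*) [Field k] :
    FreeAlgebra k (Fin 6) → FreeAlgebra k (Fin 6) → Prop
  | idem_i : QuiverRel k (ι k 0 * ι k 0) (ι k 0)
  | idem_j : QuiverRel k (ι k 1 * ι k 1) (ι k 1)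
  | orth_ij : QuiverRel k (ι k 0 * ι k 1) 0
  | orth_ji : QuiverRel k (ι k 1 * ι k 0) 0
  | sum_idem : QuiverRel k (ι k 0 + ι k 1) 1
  | alpha_src : QuiverRel k (ι k 0 * ι k 2) (ι k 2)   -- α starts at i
  | alpha_tgt : QuiverRel k (ι k 2 * ι k 1) (ι k 2)   -- α ends at j
  | beta_src : QuiverRel k (ι k 1 * ι k 3) (ι k 3)    -- β starts at j
  | beta_tgt : QuiverRel k (ι k 3 * ι k 0) (ι k 3)    -- β ends at i
  | gamma_src : QuiverRel k (ι k 0 * ι k 4) (ι k 4)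
  | gamma_tgt : QuiverRel k (ι k 4 * ι k 0) (ι k 4)
  | delta_src : QuiverRel k (ι k 0 * ι k 5) (ι k 5)
  | delta_tgt : QuiverRel k (ι k 5 * ι k 0) (ι k 5)
  | delta_sq : QuiverRel k (ι k 5 * ι k 5) (ι k 2 * ι k 3)        -- δ² = αβ
  | gamma_cube : QuiverRel k (ι k 4 * (ι k 4 * ι k 4)) (ι k 2 * ι k 3)  -- γ³ = αβ
  | delta_gamma : QuiverRel k (ι k 5 * ι k 4) 0
  | gamma_delta : QuiverRel k (ι k 4 * ι k 5) 0
  | delta_alpha : QuiverRel k (ι k 5 * ι k 2) 0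
  | gamma_alpha : QuiverRel k (ι k 4 * ι k 2) 0
  | beta_delta : QuiverRel k (ι k 3 * ι k 5) 0
  | beta_gamma : QuiverRel k (ι k 3 * ι k 4) 0

variable (k : Type*) [Field k]

/-- The 9-dimensional quiver algebra `A`. -/
abbrev QuiverAlg := RingQuot (QuiverRel k)

/-- The vertex idempotent `i`. -/
noncomputable def qi : QuiverAlg k := RingQuot.mkAlgHom k (QuiverRel k) (ι k 0)
/-- The vertex idempotent `j`. -/
noncomputable def qj : QuiverAlg k := RingQuot.mkAlgHom k (QuiverRel k) (ι k 1)
/-- The arrow `α : i → j`. -/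
noncomputable def qα : QuiverAlg k := RingQuot.mkAlgHom k (QuiverRel k) (ι k 2)
/-- The arrow `β : j → i`. -/
noncomputable def qβ : QuiverAlg k := RingQuot.mkAlgHom k (QuiverRel k) (ι k 3)
/-- The loop `γ` at `i`. -/
noncomputable def qγ : QuiverAlg k := RingQuot.mkAlgHom k (QuiverRel k) (ι k 4)
/-- The loop `δ` at `i`. -/
noncomputable def qδ : QuiverAlg k := RingQuot.mkAlgHom k (QuiverRel k) (ι k 5)

/-- The standard basis vector `{i, j, α, β, βα, γ, γ², δ, δ²}` of `A`. -/
noncomputable def qbasisVec : Fin 9 → QuiverAlg k :=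
  ![qi k, qj k, qα k, qβ k, qβ k * qα k, qγ k, qγ k ^ 2, qδ k, qδ k ^ 2]


section Aux

variable {k}

lemma qrel {x y : FreeAlgebra k (Fin 6)} (h : QuiverRel k x y) :
    RingQuot.mkAlgHom k (QuiverRel k) x = RingQuot.mkAlgHom k (QuiverRel k) y :=
  RingQuot.mkAlgHom_rel k h

lemma rii : qi k * qi k = qi k := by
  simpa only [qi, qj, qα, qβ, qγ, qδ, map_mul, map_zero] using qrel (QuiverRel.idem_i (k := k))

lemma rjj : qj k * qj k = qj k := by
  simpa only [qi, qj, qα, qβ, qγ, qδ, map_mul, map_zero] using qrel (QuiverRel.idem_j (k := k))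

lemma rij : qi k * qj k = 0 := by
  simpa only [qi, qj, qα, qβ, qγ, qδ, map_mul, map_zero] using qrel (QuiverRel.orth_ij (k := k))

lemma rji : qj k * qi k = 0 := by
  simpa only [qi, qj, qα, qβ, qγ, qδ, map_mul, map_zero] using qrel (QuiverRel.orth_ji (k := k))

lemma riα : qi k * qα k = qα k := by
  simpa only [qi, qj, qα, qβ, qγ, qδ, map_mul, map_zero] using qrel (QuiverRel.alpha_src (k := k))

lemma rαj : qα k * qj k = qα k := by
  simpa only [qi, qj, qα, qβ, qγ, qδ, map_mul, map_zero] using qrel (QuiverRel.alpha_tgt (k := k))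

lemma rjβ : qj k * qβ k = qβ k := by
  simpa only [qi, qj, qα, qβ, qγ, qδ, map_mul, map_zero] using qrel (QuiverRel.beta_src (k := k))

lemma rβi : qβ k * qi k = qβ k := by
  simpa only [qi, qj, qα, qβ, qγ, qδ, map_mul, map_zero] using qrel (QuiverRel.beta_tgt (k := k))

lemma riγ : qi k * qγ k = qγ k := by
  simpa only [qi, qj, qα, qβ, qγ, qδ, map_mul, map_zero] using qrel (QuiverRel.gamma_src (k := k))

lemma rγi : qγ k * qi k = qγ k := by
  simpa only [qi, qj, qα, qβ, qγ, qδ, map_mul, map_zero] using qrel (QuiverRel.gamma_tgt (k := k))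

lemma riδ : qi k * qδ k = qδ k := by
  simpa only [qi, qj, qα, qβ, qγ, qδ, map_mul, map_zero] using qrel (QuiverRel.delta_src (k := k))

lemma rδi : qδ k * qi k = qδ k := by
  simpa only [qi, qj, qα, qβ, qγ, qδ, map_mul, map_zero] using qrel (QuiverRel.delta_tgt (k := k))

lemma rδδ : qδ k * qδ k = qα k * qβ k := by
  simpa only [qi, qj, qα, qβ, qγ, qδ, map_mul, map_zero] using qrel (QuiverRel.delta_sq (k := k))

lemma rδγ : qδ k * qγ k = 0 := by
  simpa only [qi, qj, qα, qβ, qγ, qδ, map_mul, map_zero] using qrel (QuiverRel.delta_gamma (k := k))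

lemma rγδ : qγ k * qδ k = 0 := by
  simpa only [qi, qj, qα, qβ, qγ, qδ, map_mul, map_zero] using qrel (QuiverRel.gamma_delta (k := k))

lemma rδα : qδ k * qα k = 0 := by
  simpa only [qi, qj, qα, qβ, qγ, qδ, map_mul, map_zero] using qrel (QuiverRel.delta_alpha (k := k))

lemma rγα : qγ k * qα k = 0 := by
  simpa only [qi, qj, qα, qβ, qγ, qδ, map_mul, map_zero] using qrel (QuiverRel.gamma_alpha (k := k))

lemma rβδ : qβ k * qδ k = 0 := by
  simpa only [qi, qj, qα, qβ, qγ, qδ, map_mul, map_zero] using qrel (QuiverRel.beta_delta (k := k))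

lemma rβγ : qβ k * qγ k = 0 := by
  simpa only [qi, qj, qα, qβ, qγ, qδ, map_mul, map_zero] using qrel (QuiverRel.beta_gamma (k := k))

lemma rsum : qi k + qj k = 1 := by
  simpa only [qi, qj, map_add, map_one] using qrel (QuiverRel.sum_idem (k := k))

lemma rγγγ : qγ k * (qγ k * qγ k) = qα k * qβ k := by
  simpa only [qi, qj, qα, qβ, qγ, qδ, map_mul] using qrel (QuiverRel.gamma_cube (k := k))

lemma rαi : qα k * qi k = 0 := by rw [← rαj, mul_assoc, rji, mul_zero]

lemma rjα : qj k * qα k = 0 := by rw [← riα, ← mul_assoc, rji, zero_mul]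

lemma rβj : qβ k * qj k = 0 := by rw [← rβi, mul_assoc, rij, mul_zero]

lemma riβ : qi k * qβ k = 0 := by rw [← rjβ, ← mul_assoc, rij, zero_mul]

lemma rjγ : qj k * qγ k = 0 := by rw [← riγ, ← mul_assoc, rji, zero_mul]

lemma rγj : qγ k * qj k = 0 := by rw [← rγi, mul_assoc, rij, mul_zero]

lemma rjδ : qj k * qδ k = 0 := by rw [← riδ, ← mul_assoc, rji, zero_mul]

lemma rδj : qδ k * qj k = 0 := by rw [← rδi, mul_assoc, rij, mul_zero]

lemma rαα : qα k * qα k = 0 := by nth_rewrite 2 [← riα]; rw [← mul_assoc, rαi, zero_mul]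

lemma rββ : qβ k * qβ k = 0 := by nth_rewrite 2 [← rjβ]; rw [← mul_assoc, rβj, zero_mul]

lemma rαγ : qα k * qγ k = 0 := by rw [← riγ, ← mul_assoc, rαi, zero_mul]

lemma rαδ : qα k * qδ k = 0 := by rw [← riδ, ← mul_assoc, rαi, zero_mul]

lemma rδβ : qδ k * qβ k = 0 := by rw [← rjβ, ← mul_assoc, rδj, zero_mul]

lemma rγβ : qγ k * qβ k = 0 := by rw [← rjβ, ← mul_assoc, rγj, zero_mul]

lemma rγγγ' : (qγ k * qγ k) * qγ k = qα k * qβ k := by rw [mul_assoc, rγγγ]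

lemma rαβα : qα k * (qβ k * qα k) = 0 := by
  rw [← mul_assoc, ← rδδ, mul_assoc, rδα, mul_zero]

lemma rαβα' : (qα k * qβ k) * qα k = 0 := by rw [mul_assoc, rαβα]

lemma rβαβ : qβ k * (qα k * qβ k) = 0 := by rw [← rδδ, ← mul_assoc, rβδ, zero_mul]

lemma rβαβ' : (qβ k * qα k) * qβ k = 0 := by rw [mul_assoc, rβαβ]

lemma wii (w : QuiverAlg k) : qi k * (qi k * w) = qi k * w := by
  rw [← mul_assoc, rii]

lemma wjj (w : QuiverAlg k) : qj k * (qj k * w) = qj k * w := by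
  rw [← mul_assoc, rjj]

lemma wij (w : QuiverAlg k) : qi k * (qj k * w) = 0 := by
  rw [← mul_assoc, rij, zero_mul]

lemma wji (w : QuiverAlg k) : qj k * (qi k * w) = 0 := by
  rw [← mul_assoc, rji, zero_mul]

lemma wiα (w : QuiverAlg k) : qi k * (qα k * w) = qα k * w := by
  rw [← mul_assoc, riα]

lemma wαj (w : QuiverAlg k) : qα k * (qj k * w) = qα k * w := by
  rw [← mul_assoc, rαj]

lemma wjβ (w : QuiverAlg k) : qj k * (qβ k * w) = qβ k * w := by
  rw [← mul_assoc, rjβ]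

lemma wβi (w : QuiverAlg k) : qβ k * (qi k * w) = qβ k * w := by
  rw [← mul_assoc, rβi]

lemma wiγ (w : QuiverAlg k) : qi k * (qγ k * w) = qγ k * w := by
  rw [← mul_assoc, riγ]

lemma wγi (w : QuiverAlg k) : qγ k * (qi k * w) = qγ k * w := by
  rw [← mul_assoc, rγi]

lemma wiδ (w : QuiverAlg k) : qi k * (qδ k * w) = qδ k * w := by
  rw [← mul_assoc, riδ]

lemma wδi (w : QuiverAlg k) : qδ k * (qi k * w) = qδ k * w := by
  rw [← mul_assoc, rδi]

lemma wδγ (w : QuiverAlg k) : qδ k * (qγ k * w) = 0 := by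
  rw [← mul_assoc, rδγ, zero_mul]

lemma wγδ (w : QuiverAlg k) : qγ k * (qδ k * w) = 0 := by
  rw [← mul_assoc, rγδ, zero_mul]

lemma wδα (w : QuiverAlg k) : qδ k * (qα k * w) = 0 := by
  rw [← mul_assoc, rδα, zero_mul]

lemma wγα (w : QuiverAlg k) : qγ k * (qα k * w) = 0 := by
  rw [← mul_assoc, rγα, zero_mul]

lemma wβδ (w : QuiverAlg k) : qβ k * (qδ k * w) = 0 := by
  rw [← mul_assoc, rβδ, zero_mul]

lemma wβγ (w : QuiverAlg k) : qβ k * (qγ k * w) = 0 := by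
  rw [← mul_assoc, rβγ, zero_mul]

lemma wαi (w : QuiverAlg k) : qα k * (qi k * w) = 0 := by
  rw [← mul_assoc, rαi, zero_mul]

lemma wjα (w : QuiverAlg k) : qj k * (qα k * w) = 0 := by
  rw [← mul_assoc, rjα, zero_mul]

lemma wβj (w : QuiverAlg k) : qβ k * (qj k * w) = 0 := by
  rw [← mul_assoc, rβj, zero_mul]

lemma wiβ (w : QuiverAlg k) : qi k * (qβ k * w) = 0 := by
  rw [← mul_assoc, riβ, zero_mul]

lemma wjγ (w : QuiverAlg k) : qj k * (qγ k * w) = 0 := by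
  rw [← mul_assoc, rjγ, zero_mul]

lemma wγj (w : QuiverAlg k) : qγ k * (qj k * w) = 0 := by
  rw [← mul_assoc, rγj, zero_mul]

lemma wjδ (w : QuiverAlg k) : qj k * (qδ k * w) = 0 := by
  rw [← mul_assoc, rjδ, zero_mul]

lemma wδj (w : QuiverAlg k) : qδ k * (qj k * w) = 0 := by
  rw [← mul_assoc, rδj, zero_mul]

lemma wαα (w : QuiverAlg k) : qα k * (qα k * w) = 0 := by
  rw [← mul_assoc, rαα, zero_mul]

lemma wββ (w : QuiverAlg k) : qβ k * (qβ k * w) = 0 := by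
  rw [← mul_assoc, rββ, zero_mul]

lemma wαγ (w : QuiverAlg k) : qα k * (qγ k * w) = 0 := by
  rw [← mul_assoc, rαγ, zero_mul]

lemma wαδ (w : QuiverAlg k) : qα k * (qδ k * w) = 0 := by
  rw [← mul_assoc, rαδ, zero_mul]

lemma wδβ (w : QuiverAlg k) : qδ k * (qβ k * w) = 0 := by
  rw [← mul_assoc, rδβ, zero_mul]

lemma wγβ (w : QuiverAlg k) : qγ k * (qβ k * w) = 0 := by
  rw [← mul_assoc, rγβ, zero_mul]

lemma wδδ (w : QuiverAlg k) : qδ k * (qδ k * w) = qα k * (qβ k * w) := by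
  rw [← mul_assoc, rδδ, mul_assoc]

lemma wγγγ (w : QuiverAlg k) : qγ k * (qγ k * (qγ k * w)) = qα k * (qβ k * w) := by
  rw [← mul_assoc, ← mul_assoc, rγγγ', mul_assoc]

lemma wαβα (w : QuiverAlg k) : qα k * (qβ k * (qα k * w)) = 0 := by
  rw [← mul_assoc, ← mul_assoc, rαβα', zero_mul]

lemma wβαβ (w : QuiverAlg k) : qβ k * (qα k * (qβ k * w)) = 0 := by
  rw [← mul_assoc, ← mul_assoc, rβαβ', zero_mul]

attribute [local simp] rii rjj rij rji riα rαj rjβ rβi riγ rγi riδ rδi rδγ rγδ rδα rγα rβδ rβγ rαi rjα rβj riβ rjγ rγj rjδ rδj rαα rββ rαγ rαδ rδβ rγβ rδδ rγγγ rγγγ' rαβα rαβα' rβαβ rβαβ' wii wjj wij wji wiα wαj wjβ wβi wiγ wγi wiδ wδi wδγ wγδ wδα wγα wβδ wβγ wαi wjα wβj wiβ wjγ wγj wjδ wδj wαα wββ wαγ wαδ wδβ wγβ wδδ wγγγ wαβα wβαβ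



lemma qb0 : qbasisVec k 0 = qi k := rfl
lemma qb1 : qbasisVec k 1 = qj k := rfl
lemma qb2 : qbasisVec k 2 = qα k := rfl
lemma qb3 : qbasisVec k 3 = qβ k := rfl
lemma qb4 : qbasisVec k 4 = qβ k * qα k := rfl
lemma qb5 : qbasisVec k 5 = qγ k := rfl
lemma qb6 : qbasisVec k 6 = qγ k * qγ k := by
  rw [show qbasisVec k 6 = qγ k ^ 2 from rfl, sq]
lemma qb7 : qbasisVec k 7 = qδ k := rfl
lemma qb8 : qbasisVec k 8 = qα k * qβ k := by
  rw [show qbasisVec k 8 = qδ k ^ 2 from rfl, sq, rδδ]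

/-- span of the nine basis vectors -/
noncomputable abbrev pB : Submodule k (QuiverAlg k) :=
  Submodule.span k (Set.range (qbasisVec k))

lemma memB (m : Fin 9) : qbasisVec k m ∈ pB (k := k) :=
  Submodule.subset_span ⟨m, rfl⟩

lemma memqi : qi k ∈ pB (k := k) := memB 0
lemma memqj : qj k ∈ pB (k := k) := memB 1
lemma memqα : qα k ∈ pB (k := k) := memB 2
lemma memqβ : qβ k ∈ pB (k := k) := memB 3
lemma memβα : qβ k * qα k ∈ pB (k := k) := memB 4
lemma memqγ : qγ k ∈ pB (k := k) := memB 5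
lemma memγγ : qγ k * qγ k ∈ pB (k := k) := by have := memB (k := k) 6; simpa [qbasisVec, sq] using this
lemma memqδ : qδ k ∈ pB (k := k) := memB 7
lemma memαβ : qα k * qβ k ∈ pB (k := k) := by
  have := memB (k := k) 8
  simpa [qbasisVec, sq, rδδ] using this

lemma key_mul : ∀ m n : Fin 9, qbasisVec k m * qbasisVec k n ∈ pB (k := k) := by
  intro m n
  fin_cases m <;> fin_cases n <;>
    simp [qb0, qb1, qb2, qb3, qb4, qb5, qb6, qb7, qb8, mul_assoc, memqi, memqj, memqα, memqβ,
      memβα, memqγ, memγγ, memqδ, memαβ, Submodule.zero_mem]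

lemma mul_mem_pB : ∀ x ∈ pB (k := k), ∀ y ∈ pB (k := k), x * y ∈ pB (k := k) := by
  intro x hx
  refine Submodule.span_induction (p := fun x _ => ∀ y ∈ pB (k := k), x * y ∈ pB (k := k))
    ?_ ?_ ?_ ?_ hx
  · rintro a ⟨m, rfl⟩ y hy
    refine Submodule.span_induction (p := fun y _ => qbasisVec k m * y ∈ pB (k := k))
      ?_ ?_ ?_ ?_ hy
    · rintro b ⟨n, rfl⟩; exact key_mul m n
    · simp
    · intro u v _ _ hu hv; rw [mul_add]; exact add_mem hu hv
    · intro c u _ hu; rw [mul_smul_comm]; exact Submodule.smul_mem _ _ hu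
  · intro y _; simp
  · intro u v _ _ hu hv y hy; rw [add_mul]; exact add_mem (hu y hy) (hv y hy)
  · intro c u _ hu y hy; rw [smul_mul_assoc]; exact Submodule.smul_mem _ _ (hu y hy)

lemma pB_top : pB (k := k) = ⊤ := by
  rw [Submodule.eq_top_iff']
  intro x
  obtain ⟨y, rfl⟩ := RingQuot.mkAlgHom_surjective k (QuiverRel k) x
  induction y using FreeAlgebra.induction with
  | grade0 r =>
      rw [AlgHom.commutes, Algebra.algebraMap_eq_smul_one, ← rsum]
      exact Submodule.smul_mem _ _ (add_mem memqi memqj)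
  | grade1 i =>
      fin_cases i
      · exact memqi
      · exact memqj
      · exact memqα
      · exact memqβ
      · exact memqγ
      · exact memqδ
  | mul a b ha hb => rw [map_mul]; exact mul_mem_pB _ ha _ hb
  | add a b ha hb => rw [map_add]; exact add_mem ha hb

/-- the candidate basis of the commutator subspace -/
noncomputable def cvec : Fin 3 → QuiverAlg k :=
  ![qα k, qβ k, qα k * qβ k - qβ k * qα k]

noncomputable abbrev pC : Submodule k (QuiverAlg k) :=
  Submodule.span k (Set.range (cvec (k := k)))

lemma memc0 : qα k ∈ pC (k := k) := Submodule.subset_span ⟨0, rfl⟩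
lemma memc1 : qβ k ∈ pC (k := k) := Submodule.subset_span ⟨1, rfl⟩
lemma memc2 : qα k * qβ k - qβ k * qα k ∈ pC (k := k) := Submodule.subset_span ⟨2, rfl⟩
lemma memnc0 : -qα k ∈ pC (k := k) := neg_mem memc0
lemma memnc1 : -qβ k ∈ pC (k := k) := neg_mem memc1
lemma memnc2 : qβ k * qα k - qα k * qβ k ∈ pC (k := k) := by
  have := neg_mem (memc2 (k := k)); simpa [neg_sub] using this

lemma key_comm : ∀ m n : Fin 9,
    qbasisVec k m * qbasisVec k n - qbasisVec k n * qbasisVec k m ∈ pC (k := k) := by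
  intro m n
  fin_cases m <;> fin_cases n <;>
    simp [qb0, qb1, qb2, qb3, qb4, qb5, qb6, qb7, qb8, mul_assoc, memc0, memc1, memc2,
      memnc0, memnc1, memnc2, Submodule.zero_mem]

lemma comm_mem_pC : ∀ x ∈ pB (k := k), ∀ y ∈ pB (k := k), x * y - y * x ∈ pC (k := k) := by
  intro x hx
  refine Submodule.span_induction
    (p := fun x _ => ∀ y ∈ pB (k := k), x * y - y * x ∈ pC (k := k)) ?_ ?_ ?_ ?_ hx
  · rintro a ⟨m, rfl⟩ y hy
    refine Submodule.span_induction
      (p := fun y _ => qbasisVec k m * y - y * qbasisVec k m ∈ pC (k := k)) ?_ ?_ ?_ ?_ hy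
    · rintro b ⟨n, rfl⟩; exact key_comm m n
    · simp
    · intro u v _ _ hu hv
      have h : qbasisVec k m * (u + v) - (u + v) * qbasisVec k m =
          (qbasisVec k m * u - u * qbasisVec k m) + (qbasisVec k m * v - v * qbasisVec k m) := by
        noncomm_ring
      rw [h]; exact add_mem hu hv
    · intro c u _ hu
      have h : qbasisVec k m * (c • u) - (c • u) * qbasisVec k m =
          c • (qbasisVec k m * u - u * qbasisVec k m) := by
        rw [mul_smul_comm, smul_mul_assoc, smul_sub]
      rw [h]; exact Submodule.smul_mem _ _ hu
  · intro y _; simp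
  · intro u v _ _ hu hv y hy
    have h : (u + v) * y - y * (u + v) = (u * y - y * u) + (v * y - y * v) := by noncomm_ring
    rw [h]; exact add_mem (hu y hy) (hv y hy)
  · intro c u _ hu y hy
    have h : (c • u) * y - y * (c • u) = c • (u * y - y * u) := by
      rw [mul_smul_comm, smul_mul_assoc, smul_sub]
    rw [h]; exact Submodule.smul_mem _ _ (hu y hy)

lemma span_comm_eq :
    Submodule.span k {x : QuiverAlg k | ∃ a c : QuiverAlg k, x = a * c - c * a} =
      pC (k := k) := by
  apply le_antisymm
  · rw [Submodule.span_le]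
    rintro x ⟨a, c, rfl⟩
    have ha : a ∈ pB (k := k) := by rw [pB_top]; trivial
    have hc : c ∈ pB (k := k) := by rw [pB_top]; trivial
    exact comm_mem_pC a ha c hc
  · rw [Submodule.span_le]
    rintro x ⟨n, rfl⟩
    fin_cases n
    · exact Submodule.subset_span ⟨qi k, qα k, by
        show qα k = qi k * qα k - qα k * qi k
        rw [riα, rαi, sub_zero]⟩
    · exact Submodule.subset_span ⟨qj k, qβ k, by
        show qβ k = qj k * qβ k - qβ k * qj k
        rw [rjβ, rβj, sub_zero]⟩
    · exact Submodule.subset_span ⟨qα k, qβ k, rfl⟩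

/-- a 3-dimensional matrix representation of the algebra -/
noncomputable def fM : Fin 6 → Matrix (Fin 3) (Fin 3) k :=
  ![!![1,0,0;0,0,0;0,0,0], !![0,0,0;0,1,0;0,0,1], !![0,0,1;0,0,0;0,0,0],
    !![0,0,0;1,0,0;0,0,0], 0, 0]

lemma fM0 : fM (k := k) 0 = !![1,0,0;0,0,0;0,0,0] := rfl
lemma fM1 : fM (k := k) 1 = !![0,0,0;0,1,0;0,0,1] := rfl
lemma fM2 : fM (k := k) 2 = !![0,0,1;0,0,0;0,0,0] := rfl
lemma fM3 : fM (k := k) 3 = !![0,0,0;1,0,0;0,0,0] := rfl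
lemma fM4 : fM (k := k) 4 = 0 := rfl
lemma fM5 : fM (k := k) 5 = 0 := rfl

lemma fM_rel : ∀ ⦃x y : FreeAlgebra k (Fin 6)⦄, QuiverRel k x y →
    FreeAlgebra.lift k (fM (k := k)) x = FreeAlgebra.lift k (fM (k := k)) y := by
  intro x y h
  induction h <;>
    · simp only [map_mul, map_add, map_one, map_zero, FreeAlgebra.lift_ι_apply,
        fM0, fM1, fM2, fM3, fM4, fM5]
      ext i j
      fin_cases i <;> fin_cases j <;>
        simp [Matrix.mul_apply, Fin.sum_univ_three, Matrix.one_apply, Matrix.vecHead,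
          Matrix.vecTail]

noncomputable def rep : QuiverAlg k →ₐ[k] Matrix (Fin 3) (Fin 3) k :=
  RingQuot.liftAlgHom k ⟨FreeAlgebra.lift k (fM (k := k)), fM_rel⟩

lemma rep_gen (n : Fin 6) :
    rep (k := k) (RingQuot.mkAlgHom k (QuiverRel k) (FreeAlgebra.ι k n)) = fM (k := k) n := by
  rw [rep, RingQuot.liftAlgHom_mkAlgHom_apply, FreeAlgebra.lift_ι_apply]

lemma cvec_li : LinearIndependent k (cvec (k := k)) := by
  apply LinearIndependent.of_comp (rep (k := k)).toLinearMap
  rw [Fintype.linearIndependent_iff]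
  intro g hg
  have hα : rep (k := k) (qα k) = !![0,0,1;0,0,0;0,0,0] := by rw [qα, rep_gen 2, fM2]
  have hβ : rep (k := k) (qβ k) = !![0,0,0;1,0,0;0,0,0] := by rw [qβ, rep_gen 3, fM3]
  have h2 : rep (k := k) (qα k * qβ k - qβ k * qα k) = !![0,0,0;0,0,-1;0,0,0] := by
    rw [map_sub, map_mul, map_mul, hα, hβ]
    ext i j
    fin_cases i <;> fin_cases j <;>
      simp [Matrix.mul_apply, Fin.sum_univ_three, Matrix.vecHead, Matrix.vecTail]
  rw [Fin.sum_univ_three] at hg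
  simp only [Function.comp_apply, AlgHom.toLinearMap_apply, cvec, Matrix.cons_val_zero,
    Matrix.cons_val_one, Matrix.head_cons, Matrix.cons_val_two, Matrix.tail_cons,
    hα, hβ, h2] at hg
  have he := Matrix.ext_iff.mpr hg
  have h0 := he 0 2
  have h1 := he 1 0
  have h2'' := he 1 2
  simp [Matrix.add_apply, Matrix.smul_apply, Matrix.vecHead, Matrix.vecTail] at h0 h1 h2''
  intro i
  fin_cases i <;> simp_all

end Aux

/-- The commutator subspace `[A,A]` of the quiver algebra `A` has `k`-basis
`{α, β, αβ − βα}`. -/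
theorem stmt_5 :
    ∃ b : Module.Basis (Fin 3) k
      ↥(Submodule.span k {x : QuiverAlg k | ∃ a c : QuiverAlg k, x = a * c - c * a}),
      (b 0 : QuiverAlg k) = qα k ∧ (b 1 : QuiverAlg k) = qβ k ∧
      (b 2 : QuiverAlg k) = qα k * qβ k - qβ k * qα k := by
  rw [span_comm_eq]
  refine ⟨Module.Basis.span (cvec_li (k := k)), ?_, ?_, ?_⟩ <;> rw [Module.Basis.span_apply] <;> rfl
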